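/- arXiv:1302.2467 — 2 statements merged into one kernel-verified Lean document; each statement's English description precedes it below -/
import Mathlib

section
/- Let A be an n×n matrix over ℂ whose eigenvalues, counted with algebraic multiplicity, are μ₁, …, μₙ (i.e. the characteristic polynomial of A has root multiset {μ₁, …, μₙ}). Let B = 2A⊙Iₙ be the m×m matrix, m = n(n−1)/2, with rows and columns indexed by pairs (p,q) with n ≥ p > q ≥ 1, whose entries are given by: B_{(p,q),(r,s)} = −a_{ps} if r = q; a_{pr} if r ≠ p and s = q; a_{pp} + a_{qq} if r = p and s = q; a_{qs} if r = p and s ≠ q; −a_{qr} if s = p; and 0 otherwise. Then the eigenvalues of B, counted with algebraic multiplicity, are exactly the sums μ_p + μ_q for n ≥ p > q ≥ 1; i.e. the root multiset of the characteristic polynomial of B is {μ_p + μ_q : 1 ≤ q < p ≤ n}. -/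
/-- The index set of the bialternate product: pairs `(p, q)` with `p > q`. -/
def BialtIndex (n : ℕ) : Type := {pq : Fin n × Fin n // pq.2 < pq.1}

instance (n : ℕ) : Fintype (BialtIndex n) := by unfold BialtIndex; infer_instance
instance (n : ℕ) : DecidableEq (BialtIndex n) := by unfold BialtIndex; infer_instance

/-- The bialternate product `2A ⊙ Iₙ` of `2A` with the identity, an `m × m`
matrix with `m = n(n−1)/2`, rows indexed by `(p,q)`, `p > q`, and columns by
`(r,s)`, `r > s`, given by the entrywise case formula. -/
def bialt {n : ℕ} (A : Matrix (Fin n) (Fin n) ℂ) :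
    Matrix (BialtIndex n) (BialtIndex n) ℂ :=
  fun pq rs =>
    let p := pq.1.1; let q := pq.1.2; let r := rs.1.1; let s := rs.1.2
    if r = q then -A p s
    else if r ≠ p ∧ s = q then A p r
    else if r = p ∧ s = q then A p p + A q q
    else if r = p ∧ s ≠ q then A q s
    else if s = p then -A q r
    else 0

open Matrix Polynomial Finset

namespace BialtProof

variable {n : ℕ}

lemma bialt_apply' (A : Matrix (Fin n) (Fin n) ℂ) (pq rs : BialtIndex n) :
    bialt A pq rs =
      (if rs.1.2 = pq.1.2 then A pq.1.1 rs.1.1 else 0)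
      - (if rs.1.1 = pq.1.2 then A pq.1.1 rs.1.2 else 0)
      + (if rs.1.1 = pq.1.1 then A pq.1.2 rs.1.2 else 0)
      - (if rs.1.2 = pq.1.1 then A pq.1.2 rs.1.1 else 0) := by
  obtain ⟨⟨p, q⟩, hpq⟩ := pq
  obtain ⟨⟨r, s⟩, hrs⟩ := rs
  have h1 : (q : ℕ) < (p : ℕ) := hpq
  have h2 : (s : ℕ) < (r : ℕ) := hrs
  simp only [bialt]
  split_ifs <;> simp_all <;>
    first
      | (exfalso; simp only [Fin.ext_iff, Fin.lt_def, ne_eq] at *; omega)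
      | ring

def Phi (x : BialtIndex n → ℂ) : Matrix (Fin n) (Fin n) ℂ :=
  Matrix.of fun i j =>
    if h : j < i then x ⟨(i, j), h⟩ else if h' : i < j then -x ⟨(j, i), h'⟩ else 0

lemma Phi_lt (x : BialtIndex n → ℂ) {i j : Fin n} (h : j < i) : Phi x i j = x ⟨(i, j), h⟩ := by
  simp [Phi, h]

lemma Phi_skew (x : BialtIndex n → ℂ) (i j : Fin n) : Phi x j i = - Phi x i j := by
  rcases lt_trichotomy i j with h | h | h
  · simp [Phi, h, h.not_gt, not_lt_of_gt h]
  · subst h; simp [Phi, lt_irrefl]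
  · simp [Phi, h, h.not_gt, not_lt_of_gt h]

lemma Phi_diag (x : BialtIndex n → ℂ) (i : Fin n) : Phi x i i = 0 := by simp [Phi]

lemma Phi_inj {x y : BialtIndex n → ℂ} (h : Phi x = Phi y) : x = y := by
  funext pq
  obtain ⟨⟨i, j⟩, hij⟩ := pq
  have := congrFun (congrFun h i) j
  rwa [Phi_lt x hij, Phi_lt y hij] at this

lemma ext_of_mulVec {m : Type*} [Fintype m] [DecidableEq m]
    {M N : Matrix m m ℂ} (h : ∀ x, M *ᵥ x = N *ᵥ x) : M = N := by
  ext i j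
  have := congrFun (h (Pi.single j 1)) i
  simpa [Matrix.mulVec_single] using this


lemma sum_bialtIndex (F : Fin n × Fin n → ℂ) :
    ∑ rs : BialtIndex n, F rs.1
      = ∑ z ∈ Finset.univ.filter (fun z : Fin n × Fin n => z.2 < z.1), F z := by
  rw [← Finset.sum_coe_sort (Finset.univ.filter (fun z : Fin n × Fin n => z.2 < z.1)) F]
  exact Fintype.sum_equiv
    ⟨fun rs => ⟨rs.1, by simp [rs.2]⟩, fun z => ⟨z.1, by have := z.2; simp only [Finset.mem_filter] at this; exact this.2⟩,
      fun _ => rfl, fun _ => rfl⟩ _ _ (fun _ => rfl)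

lemma two_mul_sum_bialt (F : Fin n × Fin n → ℂ)
    (hsym : ∀ r s : Fin n, F (s, r) = F (r, s)) (hdiag : ∀ r : Fin n, F (r, r) = 0) :
    (2 : ℂ) * ∑ rs : BialtIndex n, F rs.1 = ∑ z : Fin n × Fin n, F z := by
  rw [sum_bialtIndex]
  have hswap : ∑ z ∈ Finset.univ.filter (fun z : Fin n × Fin n => z.2 < z.1), F z
      = ∑ z ∈ Finset.univ.filter (fun z : Fin n × Fin n => z.1 < z.2), F z := by
    refine Finset.sum_bij' (fun z _ => Prod.swap z) (fun z _ => Prod.swap z)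
      ?_ ?_ ?_ ?_ ?_ <;> simp +contextual
    intro a b _
    exact hsym b a
  have hsplit := Finset.sum_filter_add_sum_filter_not
    (Finset.univ : Finset (Fin n × Fin n)) (fun z => z.2 < z.1) F
  have hsplit2 := Finset.sum_filter_add_sum_filter_not
    ((Finset.univ : Finset (Fin n × Fin n)).filter (fun z => ¬ z.2 < z.1))
    (fun z => z.1 < z.2) F
  have hdiag0 : ∑ z ∈ (((Finset.univ : Finset (Fin n × Fin n)).filter
      (fun z => ¬ z.2 < z.1)).filter (fun z => ¬ z.1 < z.2)), F z = 0 := by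
    refine Finset.sum_eq_zero ?_
    rintro ⟨a, b⟩ hz
    simp only [Finset.mem_filter, Finset.mem_univ, true_and, not_lt] at hz
    have : a = b := le_antisymm hz.1 hz.2
    subst this
    exact hdiag a
  have hsnd : ((Finset.univ : Finset (Fin n × Fin n)).filter (fun z => ¬ z.2 < z.1)).filter
      (fun z => z.1 < z.2) = (Finset.univ : Finset (Fin n × Fin n)).filter (fun z => z.1 < z.2) := by
    ext z
    simp only [Finset.mem_filter, Finset.mem_univ, true_and, and_iff_right_iff_imp]
    intro h
    exact fun h2 => absurd (h.trans h2) (lt_irrefl _)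
  rw [hsnd] at hsplit2
  have : ∑ z : Fin n × Fin n, F z
      = ∑ z ∈ Finset.univ.filter (fun z : Fin n × Fin n => z.2 < z.1), F z
        + ∑ z ∈ Finset.univ.filter (fun z : Fin n × Fin n => z.1 < z.2), F z := by
    rw [← hsplit, ← hsplit2, hdiag0, add_zero]
  rw [this, ← hswap, two_mul]


lemma skew_ext {M N : Matrix (Fin n) (Fin n) ℂ}
    (hM : ∀ i j, M j i = -M i j) (hN : ∀ i j, N j i = -N i j)
    (h : ∀ i j, j < i → M i j = N i j) : M = N := by
  ext i j
  rcases lt_trichotomy j i with hlt | heq | hgt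
  · exact h i j hlt
  · subst heq
    have hM0 : M j j = 0 := by linear_combination (hM j j) / 2
    have hN0 : N j j = 0 := by linear_combination (hN j j) / 2
    rw [hM0, hN0]
  · rw [hM j i, hN j i, h j i hgt]

lemma mul_add_transpose_skew (A X : Matrix (Fin n) (Fin n) ℂ)
    (hX : ∀ i j, X j i = -X i j) (i j : Fin n) :
    (A * X + X * Aᵀ) j i = -((A * X + X * Aᵀ) i j) := by
  simp only [Matrix.add_apply, Matrix.mul_apply, Matrix.transpose_apply]
  have e1 : ∑ k, A j k * X k i = -∑ k, X i k * A j k := by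
    rw [← Finset.sum_neg_distrib]
    exact Finset.sum_congr rfl fun k _ => by rw [hX i k]; ring
  have e2 : ∑ k, X j k * A i k = -∑ k, A i k * X k j := by
    rw [← Finset.sum_neg_distrib]
    exact Finset.sum_congr rfl fun k _ => by rw [hX k j]; ring
  rw [e1, e2]; ring

lemma conj_skew (U X : Matrix (Fin n) (Fin n) ℂ)
    (hX : ∀ i j, X j i = -X i j) (i j : Fin n) :
    (U * X * Uᵀ) j i = -((U * X * Uᵀ) i j) := by
  simp only [Matrix.mul_apply, Matrix.transpose_apply, Finset.sum_mul]
  rw [← Finset.sum_neg_distrib, Finset.sum_comm]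
  refine Finset.sum_congr rfl fun b _ => ?_
  rw [← Finset.sum_neg_distrib]
  refine Finset.sum_congr rfl fun a _ => ?_
  rw [hX a b]; ring

lemma bialt_mulVec (A : Matrix (Fin n) (Fin n) ℂ) (x : BialtIndex n → ℂ) :
    Phi (bialt A *ᵥ x) = A * Phi x + Phi x * Aᵀ := by
  set X := Phi x with hXdef
  have hX : ∀ i j, X j i = -X i j := fun i j => Phi_skew x i j
  refine skew_ext (fun i j => Phi_skew _ i j)
    (fun i j => mul_add_transpose_skew A X hX i j) ?_
  intro i j hij
  rw [Phi_lt _ hij]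
  set F : Fin n × Fin n → ℂ := fun z =>
    ((if z.2 = j then A i z.1 else 0) - (if z.1 = j then A i z.2 else 0)
      + (if z.1 = i then A j z.2 else 0) - (if z.2 = i then A j z.1 else 0)) * X z.1 z.2
    with hF
  have hsym : ∀ r s : Fin n, F (s, r) = F (r, s) := by
    intro r s
    simp only [hF]
    rw [hX r s]; ring
  have hdiag : ∀ r : Fin n, F (r, r) = 0 := by
    intro r
    simp only [hF, Phi_diag, hXdef]
    ring
  have hmv : (bialt A *ᵥ x) ⟨(i, j), hij⟩ = ∑ rs : BialtIndex n, F rs.1 := by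
    simp only [Matrix.mulVec, dotProduct]
    refine Finset.sum_congr rfl fun rs _ => ?_
    obtain ⟨⟨r, s⟩, hrs⟩ := rs
    erw [bialt_apply']
    have hx : x ⟨(r, s), hrs⟩ = X r s := (Phi_lt x hrs).symm
    rw [hx]
  have inner : ∀ r : Fin n, ∑ s : Fin n, F (r, s)
      = A i r * X r j - (if r = j then ∑ s : Fin n, A i s * X r s else 0)
        + (if r = i then ∑ s : Fin n, A j s * X r s else 0) - A j r * X r i := by
    intro r
    simp only [hF, sub_mul, add_mul, ite_mul, zero_mul, Finset.sum_sub_distrib,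
      Finset.sum_add_distrib, Finset.sum_ite_irrel, Finset.sum_const_zero,
      Finset.sum_ite_eq', Finset.mem_univ, if_true]
  have hfull : ∑ z : Fin n × Fin n, F z = 2 * ((A * X + X * Aᵀ) i j) := by
    rw [Fintype.sum_prod_type]
    rw [Finset.sum_congr rfl (fun r _ => inner r)]
    simp only [Finset.sum_sub_distrib, Finset.sum_add_distrib, Finset.sum_ite_eq',
      Finset.mem_univ, if_true]
    have g1 : ∑ r : Fin n, A i r * X r j = (A * X) i j := (Matrix.mul_apply).symm
    have g2 : ∑ s : Fin n, A i s * X j s = -((A * X) i j) := by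
      rw [Matrix.mul_apply, ← Finset.sum_neg_distrib]
      exact Finset.sum_congr rfl fun s _ => by rw [hX s j]; ring
    have g3 : ∑ s : Fin n, A j s * X i s = (X * Aᵀ) i j := by
      rw [Matrix.mul_apply]
      exact Finset.sum_congr rfl fun s _ => by rw [Matrix.transpose_apply]; ring
    have g4 : ∑ r : Fin n, A j r * X r i = -((X * Aᵀ) i j) := by
      rw [Matrix.mul_apply, ← Finset.sum_neg_distrib]
      refine Finset.sum_congr rfl fun r _ => ?_
      rw [Matrix.transpose_apply, hX i r]; ring
    rw [g1, g2, g3, g4, Matrix.add_apply]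
    ring
  have h2 : 2 * ((bialt A *ᵥ x) ⟨(i, j), hij⟩) = 2 * ((A * X + X * Aᵀ) i j) := by
    rw [hmv, two_mul_sum_bialt F hsym hdiag, hfull]
  exact mul_left_cancel₀ two_ne_zero h2


def comp2 (U : Matrix (Fin n) (Fin n) ℂ) : Matrix (BialtIndex n) (BialtIndex n) ℂ :=
  Matrix.of fun pq rs =>
    U pq.1.1 rs.1.1 * U pq.1.2 rs.1.2 - U pq.1.1 rs.1.2 * U pq.1.2 rs.1.1

lemma comp2_mulVec (U : Matrix (Fin n) (Fin n) ℂ) (x : BialtIndex n → ℂ) :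
    Phi (comp2 U *ᵥ x) = U * Phi x * Uᵀ := by
  set X := Phi x with hXdef
  have hX : ∀ i j, X j i = -X i j := fun i j => Phi_skew x i j
  refine skew_ext (fun i j => Phi_skew _ i j) (fun i j => conj_skew U X hX i j) ?_
  intro i j hij
  rw [Phi_lt _ hij]
  set F : Fin n × Fin n → ℂ := fun z =>
    (U i z.1 * U j z.2 - U i z.2 * U j z.1) * X z.1 z.2 with hF
  have hsym : ∀ r s : Fin n, F (s, r) = F (r, s) := by
    intro r s
    simp only [hF]
    rw [hX r s]; ring
  have hdiag : ∀ r : Fin n, F (r, r) = 0 := by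
    intro r; simp only [hF]; ring
  have hmv : (comp2 U *ᵥ x) ⟨(i, j), hij⟩ = ∑ rs : BialtIndex n, F rs.1 := by
    simp only [Matrix.mulVec, dotProduct]
    refine Finset.sum_congr rfl fun rs _ => ?_
    obtain ⟨⟨r, s⟩, hrs⟩ := rs
    have hx : x ⟨(r, s), hrs⟩ = X r s := (Phi_lt x hrs).symm
    rw [hx]; rfl
  have hfull : ∑ z : Fin n × Fin n, F z = 2 * ((U * X * Uᵀ) i j) := by
    rw [Fintype.sum_prod_type]
    have inner : ∀ r : Fin n, ∑ s : Fin n, F (r, s)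
        = U i r * ∑ s : Fin n, X r s * U j s - U j r * ∑ s : Fin n, X r s * U i s := by
      intro r
      rw [Finset.mul_sum, Finset.mul_sum, ← Finset.sum_sub_distrib]
      exact Finset.sum_congr rfl fun s _ => by simp only [hF]; ring
    rw [Finset.sum_congr rfl (fun r _ => inner r)]
    rw [Finset.sum_sub_distrib]
    have key : ∀ a b : Fin n, ∑ r : Fin n, U a r * ∑ s : Fin n, X r s * U b s
        = (U * X * Uᵀ) a b := by
      intro a b
      simp only [Matrix.mul_apply, Matrix.transpose_apply, Finset.sum_mul, Finset.mul_sum]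
      rw [Finset.sum_comm]
      exact Finset.sum_congr rfl fun s _ => Finset.sum_congr rfl fun r _ => by ring
    rw [key i j, key j i, conj_skew U X hX i j]
    ring
  have h2 : 2 * ((comp2 U *ᵥ x) ⟨(i, j), hij⟩) = 2 * ((U * X * Uᵀ) i j) := by
    rw [hmv, two_mul_sum_bialt F hsym hdiag, hfull]
  exact mul_left_cancel₀ two_ne_zero h2


lemma comp2_one : comp2 (1 : Matrix (Fin n) (Fin n) ℂ) = 1 := by
  ext pq rs
  obtain ⟨⟨p, q⟩, hpq⟩ := pq
  obtain ⟨⟨r, s⟩, hrs⟩ := rs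
  erw [Matrix.one_apply, comp2, Matrix.of_apply]
  simp only [comp2, Matrix.of_apply, Matrix.one_apply, Subtype.mk.injEq, Prod.mk.injEq]
  split_ifs <;>
    first
      | (exfalso; simp only [Fin.ext_iff, Fin.lt_def, ne_eq, not_and, Prod.mk.injEq] at *; omega)
      | simp_all
      | (simp_all; ring)

lemma comp2_mul (U V : Matrix (Fin n) (Fin n) ℂ) :
    comp2 (U * V) = comp2 U * comp2 V := by
  refine ext_of_mulVec fun x => ?_
  apply Phi_inj
  rw [← Matrix.mulVec_mulVec, comp2_mulVec, comp2_mulVec, comp2_mulVec, Matrix.transpose_mul]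
  simp only [Matrix.mul_assoc]

lemma bialt_conj (U V A : Matrix (Fin n) (Fin n) ℂ) (hUV : U * V = 1) (hVU : V * U = 1) :
    bialt (U * A * V) = comp2 U * bialt A * comp2 V := by
  have h1 : comp2 U * comp2 V = 1 := by rw [← comp2_mul, hUV, comp2_one]
  have hUtVt : Uᵀ * Vᵀ = 1 := by rw [← Matrix.transpose_mul, hVU, Matrix.transpose_one]
  have key : bialt (U * A * V) * comp2 U = comp2 U * bialt A := by
    refine ext_of_mulVec fun x => ?_
    apply Phi_inj
    rw [← Matrix.mulVec_mulVec, bialt_mulVec, comp2_mulVec, ← Matrix.mulVec_mulVec,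
      comp2_mulVec, bialt_mulVec]
    set X := Phi x
    have e1 : U * A * V * (U * X * Uᵀ) = U * (A * X) * Uᵀ := by
      calc U * A * V * (U * X * Uᵀ) = U * (A * ((V * U) * (X * Uᵀ))) := by
            simp only [Matrix.mul_assoc]
        _ = U * (A * (X * Uᵀ)) := by rw [hVU, Matrix.one_mul]
        _ = U * (A * X) * Uᵀ := by simp only [Matrix.mul_assoc]
    have e2 : U * X * Uᵀ * (U * A * V)ᵀ = U * (X * Aᵀ) * Uᵀ := by
      rw [Matrix.transpose_mul, Matrix.transpose_mul]
      calc U * X * Uᵀ * (Vᵀ * (Aᵀ * Uᵀ)) = U * (X * ((Uᵀ * Vᵀ) * (Aᵀ * Uᵀ))) := by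
            simp only [Matrix.mul_assoc]
        _ = U * (X * (Aᵀ * Uᵀ)) := by rw [hUtVt, Matrix.one_mul]
        _ = U * (X * Aᵀ) * Uᵀ := by simp only [Matrix.mul_assoc]
    rw [e1, e2, ← Matrix.add_mul, ← Matrix.mul_add]
  calc bialt (U * A * V) = bialt (U * A * V) * (comp2 U * comp2 V) := by
        rw [h1, Matrix.mul_one]
    _ = bialt (U * A * V) * comp2 U * comp2 V := (Matrix.mul_assoc _ _ _).symm
    _ = comp2 U * bialt A * comp2 V := by rw [key]

lemma charpoly_similar {m : Type*} [Fintype m] [DecidableEq m]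
    (P Q M : Matrix m m ℂ) (hPQ : P * Q = 1) :
    (P * M * Q).charpoly = M.charpoly := by
  classical
  have hscalar : ∀ N : Matrix m m (Polynomial ℂ),
      N * Matrix.scalar m (Polynomial.X : Polynomial ℂ)
        = Matrix.scalar m (Polynomial.X : Polynomial ℂ) * N := by
    intro N
    ext i j
    simp [Matrix.scalar, Matrix.mul_diagonal, Matrix.diagonal_mul, mul_comm]
  have hmapmul : ∀ (M₁ M₂ : Matrix m m ℂ),
      (M₁ * M₂).map (Polynomial.C : ℂ →+* Polynomial ℂ)
        = M₁.map Polynomial.C * M₂.map Polynomial.C := fun M₁ M₂ =>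
    Matrix.map_mul (f := (Polynomial.C : ℂ →+* Polynomial ℂ))
  have hmapone : (1 : Matrix m m ℂ).map (Polynomial.C : ℂ →+* Polynomial ℂ) = 1 :=
    Matrix.map_one _ (map_zero _) (map_one _)
  have h1 : Matrix.charmatrix (P * M * Q)
      = P.map Polynomial.C * Matrix.charmatrix M * Q.map Polynomial.C := by
    rw [Matrix.charmatrix, Matrix.charmatrix]
    rw [Matrix.mul_sub, Matrix.sub_mul]
    congr 1
    · symm
      rw [hscalar (P.map Polynomial.C), Matrix.mul_assoc, ← hmapmul, hPQ, hmapone,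
        Matrix.mul_one]
    · simp only [RingHom.mapMatrix_apply]
      rw [← hmapmul, ← hmapmul]
  have hdet1 : (P.map (Polynomial.C : ℂ →+* Polynomial ℂ)).det
      * (Q.map (Polynomial.C : ℂ →+* Polynomial ℂ)).det = 1 := by
    rw [← Matrix.det_mul, ← hmapmul, hPQ, hmapone, Matrix.det_one]
  rw [Matrix.charpoly, Matrix.charpoly, h1, Matrix.det_mul, Matrix.det_mul]
  linear_combination (Matrix.charmatrix M).det * hdet1


instance : LinearOrder (BialtIndex n) :=
  LinearOrder.lift' (fun pq : BialtIndex n => toLex (pq.1 : Fin n × Fin n))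
    (fun a b h => Subtype.ext (toLex.injective h))

lemma bialt_lt_iff {a b : BialtIndex n} :
    a < b ↔ toLex (a.1 : Fin n × Fin n) < toLex (b.1 : Fin n × Fin n) := Iff.rfl

lemma bialt_blockTriangular {T : Matrix (Fin n) (Fin n) ℂ} (hT : T.BlockTriangular id) :
    (bialt T).BlockTriangular (id : BialtIndex n → BialtIndex n) := by
  intro pq rs h
  have hlex := bialt_lt_iff.mp h
  rw [Prod.Lex.lt_iff] at hlex
  obtain ⟨⟨p, q⟩, hpq⟩ := pq
  obtain ⟨⟨r, s⟩, hrs⟩ := rs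
  erw [bialt_apply']
  have hT' : ∀ i j : Fin n, j < i → T i j = 0 := fun i j hj => hT hj
  have e1 : (if s = q then T p r else 0) = 0 := by
    split_ifs with hc
    · rcases hlex with h1 | ⟨h1, h2⟩
      · exact hT' p r h1
      · subst hc; exact absurd h2 (lt_irrefl _)
    · rfl
  have e2 : (if r = q then T p s else 0) = 0 := by
    split_ifs with hc
    · subst hc; exact hT' p s (hrs.trans hpq)
    · rfl
  have e3 : (if r = p then T q s else 0) = 0 := by
    split_ifs with hc
    · rcases hlex with h1 | ⟨h1, h2⟩
      · subst hc; exact absurd h1 (lt_irrefl _)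
      · exact hT' q s h2
    · rfl
  have e4 : (if s = p then T q r else 0) = 0 := by
    split_ifs with hc
    · exfalso
      have hrs' : s < r := hrs
      have hpq' : q < p := hpq
      rcases hlex with h1 | ⟨h1, h2⟩
      · have h1' : r < p := h1
        simp only [Fin.ext_iff, Fin.lt_def] at h1' hc hrs' hpq'; omega
      · have h1' : r = p := h1
        simp only [Fin.ext_iff, Fin.lt_def] at h1' hc hrs' hpq'; omega
    · rfl
  rw [e1, e2, e3, e4]
  ring

lemma charpoly_bialt_triangular {T : Matrix (Fin n) (Fin n) ℂ}
    (hT : T.BlockTriangular id) :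
    (bialt T).charpoly
      = ∏ pq : BialtIndex n, (X - C (T pq.1.1 pq.1.1 + T pq.1.2 pq.1.2)) := by
  rw [Matrix.charpoly_of_upperTriangular _ (bialt_blockTriangular hT)]
  refine Finset.prod_congr rfl fun pq _ => ?_
  obtain ⟨⟨p, q⟩, h⟩ := pq
  erw [bialt_apply']
  have h1 : p ≠ q := ne_of_gt h
  have h2 : q ≠ p := ne_of_lt h
  simp [h1, h2]


def liftM {m : ℕ} (M : Matrix (Fin m) (Fin m) ℂ) : Matrix (Fin (m + 1)) (Fin (m + 1)) ℂ :=
  Matrix.of fun k j =>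
    Fin.cases (Fin.cases (1 : ℂ) (fun _ => 0) j) (fun k' => Fin.cases 0 (fun j' => M k' j') j) k

@[simp] lemma liftM_zero_zero {m : ℕ} (M : Matrix (Fin m) (Fin m) ℂ) :
    liftM M 0 0 = 1 := rfl

@[simp] lemma liftM_zero_succ {m : ℕ} (M : Matrix (Fin m) (Fin m) ℂ) (j : Fin m) :
    liftM M 0 j.succ = 0 := by simp [liftM]

@[simp] lemma liftM_succ_zero {m : ℕ} (M : Matrix (Fin m) (Fin m) ℂ) (k : Fin m) :
    liftM M k.succ 0 = 0 := by simp [liftM]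

@[simp] lemma liftM_succ_succ {m : ℕ} (M : Matrix (Fin m) (Fin m) ℂ) (k j : Fin m) :
    liftM M k.succ j.succ = M k j := by simp [liftM]

lemma liftM_mul {m : ℕ} (M N : Matrix (Fin m) (Fin m) ℂ) :
    liftM M * liftM N = liftM (M * N) := by
  ext k j
  rcases Fin.eq_zero_or_eq_succ k with rfl | ⟨k', rfl⟩ <;>
    rcases Fin.eq_zero_or_eq_succ j with rfl | ⟨j', rfl⟩ <;>
      simp [Matrix.mul_apply, Fin.sum_univ_succ]

lemma liftM_one {m : ℕ} : liftM (1 : Matrix (Fin m) (Fin m) ℂ) = 1 := by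
  ext k j
  rcases Fin.eq_zero_or_eq_succ k with rfl | ⟨k', rfl⟩ <;>
    rcases Fin.eq_zero_or_eq_succ j with rfl | ⟨j', rfl⟩ <;>
      simp [Matrix.one_apply, Fin.succ_ne_zero, (Fin.succ_ne_zero _).symm, Fin.succ_inj]


set_option synthInstance.maxHeartbeats 1000000 in
set_option maxHeartbeats 1000000 in
lemma exists_triangularization (n : ℕ) (A : Matrix (Fin n) (Fin n) ℂ) :
    ∃ P Q T : Matrix (Fin n) (Fin n) ℂ,
      P * Q = 1 ∧ Q * P = 1 ∧ T.BlockTriangular id ∧ A = P * T * Q := by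
  induction n with
  | zero =>
    exact ⟨1, 1, A, Subsingleton.elim _ _, Subsingleton.elim _ _,
      fun i _ _ => i.elim0, Subsingleton.elim _ _⟩
  | succ m ih =>
    -- an eigenvalue
    have hdeg : A.charpoly.degree ≠ 0 := by
      rw [Matrix.charpoly_degree_eq_dim, Fintype.card_fin]
      exact_mod_cast Nat.succ_ne_zero m
    obtain ⟨μ, hμ⟩ := Complex.isAlgClosed.exists_root A.charpoly hdeg
    have hmapeval : (Matrix.charmatrix A).map ⇑(Polynomial.evalRingHom μ)
        = μ • (1 : Matrix (Fin (m + 1)) (Fin (m + 1)) ℂ) - A := by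
      ext i j
      by_cases h : i = j <;>
        simp [h, Matrix.charmatrix_apply, Matrix.one_apply, Matrix.diagonal_apply]
    have hdet : (μ • (1 : Matrix (Fin (m + 1)) (Fin (m + 1)) ℂ) - A).det = 0 := by
      have h2 := RingHom.map_det (Polynomial.evalRingHom μ) (Matrix.charmatrix A)
      rw [RingHom.mapMatrix_apply] at h2
      rw [← hmapeval, ← h2]
      simpa [Matrix.charpoly] using hμ
    obtain ⟨v, hv0, hv⟩ := Matrix.exists_mulVec_eq_zero_iff.mpr hdet
    have hAv : A *ᵥ v = μ • v := by
      have h1 : μ • v - A *ᵥ v = 0 := by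
        rw [← hv, Matrix.sub_mulVec, Matrix.smul_mulVec, Matrix.one_mulVec]
      linear_combination (norm := module) -h1
    obtain ⟨i, hvi⟩ : ∃ i, v i ≠ 0 := by
      by_contra h
      push_neg at h
      exact hv0 (funext h)
    set σ : Equiv.Perm (Fin (m + 1)) := Equiv.swap 0 i with hσ
    set P0 : Matrix (Fin (m + 1)) (Fin (m + 1)) ℂ :=
      ((1 : Matrix (Fin (m + 1)) (Fin (m + 1)) ℂ).updateCol i v).submatrix id ⇑σ with hP0
    have hdetP0 : P0.det ≠ 0 := by
      rw [hP0, Matrix.det_permute']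
      have : ((1 : Matrix (Fin (m + 1)) (Fin (m + 1)) ℂ).updateCol i v).det = v i := by
        rw [← Matrix.cramer_apply, Matrix.cramer_one]
        rfl
      rw [this]
      simp [hvi, Int.isUnit_iff]
    have hP0unit : IsUnit P0.det := isUnit_iff_ne_zero.mpr hdetP0
    set Q0 := P0⁻¹ with hQ0
    have hPQ0 : P0 * Q0 = 1 := Matrix.mul_nonsing_inv _ hP0unit
    have hQP0 : Q0 * P0 = 1 := Matrix.nonsing_inv_mul _ hP0unit
    have hP0col : P0 *ᵥ Pi.single 0 1 = v := by
      ext k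
      rw [Matrix.mulVec_single]
      simp [hP0, hσ, Matrix.submatrix_apply, Equiv.swap_apply_left, Matrix.updateCol_apply]
    set B := Q0 * A * P0 with hB
    have hBe0 : B *ᵥ Pi.single 0 1 = μ • (Pi.single 0 1 : Fin (m + 1) → ℂ) := by
      have s1 : B *ᵥ Pi.single 0 1 = Q0 *ᵥ (A *ᵥ (P0 *ᵥ Pi.single 0 1)) := by
        rw [hB, ← Matrix.mulVec_mulVec, ← Matrix.mulVec_mulVec]
      have s2 : Q0 *ᵥ v = Pi.single 0 1 := by
        rw [← hP0col, Matrix.mulVec_mulVec, hQP0, Matrix.one_mulVec]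
      rw [s1, hP0col, hAv, Matrix.mulVec_smul, s2]
    have hB0 : ∀ k : Fin m, B k.succ 0 = 0 := by
      intro k
      have h1 := congrFun hBe0 k.succ
      simp only [Matrix.mulVec_single, mul_one, Pi.smul_apply, Pi.single_apply] at h1
      simpa [Fin.succ_ne_zero] using h1
    have hB00 : B 0 0 = μ := by
      have h1 := congrFun hBe0 (0 : Fin (m + 1))
      simp only [Matrix.mulVec_single, mul_one, Pi.smul_apply, Pi.single_apply] at h1
      simpa using h1
    set D := B.submatrix Fin.succ Fin.succ with hDdef
    obtain ⟨P', Q', T', hPQ', hQP', hT', hD⟩ := ih D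
    have hQDP : Q' * D * P' = T' := by
      rw [hD]
      calc Q' * (P' * T' * Q') * P' = Q' * P' * T' * (Q' * P') := by
            simp only [Matrix.mul_assoc]
        _ = T' := by rw [hQP', Matrix.one_mul, Matrix.mul_one]
    set P1 := liftM P' with hP1
    set Q1 := liftM Q' with hQ1
    set T := Q1 * B * P1 with hT
    have hTcol : ∀ k : Fin m, T k.succ 0 = 0 := by
      intro k
      rw [hT]
      simp [Matrix.mul_apply, Fin.sum_univ_succ, hB0, hP1, hQ1]
    have hTblock : ∀ k j : Fin m, T k.succ j.succ = T' k j := by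
      intro k j
      rw [← hQDP, hT]
      simp only [Matrix.mul_apply, Fin.sum_univ_succ, hP1, hQ1, liftM_zero_zero,
        liftM_zero_succ, liftM_succ_zero, liftM_succ_succ, Matrix.submatrix_apply, hDdef,
        zero_mul, mul_zero, zero_add, add_zero, mul_one, Finset.sum_mul, Finset.mul_sum,
        Finset.sum_const_zero]
    have hTtri : T.BlockTriangular id := by
      intro k j hjk
      rcases Fin.eq_zero_or_eq_succ k with rfl | ⟨k', rfl⟩
      · exact absurd hjk (by simp)
      rcases Fin.eq_zero_or_eq_succ j with rfl | ⟨j', rfl⟩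
      · exact hTcol k'
      · rw [hTblock]
        exact hT' (by simpa [Fin.succ_lt_succ_iff] using hjk)
    refine ⟨P0 * P1, Q1 * Q0, T, ?_, ?_, hTtri, ?_⟩
    · calc P0 * P1 * (Q1 * Q0) = P0 * (P1 * Q1) * Q0 := by simp only [Matrix.mul_assoc]
        _ = 1 := by rw [hP1, hQ1, liftM_mul, hPQ', liftM_one, Matrix.mul_one, hPQ0]
    · calc Q1 * Q0 * (P0 * P1) = Q1 * (Q0 * P0) * P1 := by simp only [Matrix.mul_assoc]
        _ = 1 := by rw [hQP0, Matrix.mul_one, hQ1, hP1, liftM_mul, hQP', liftM_one]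
    · have hQ1P1 : P1 * Q1 = 1 := by rw [hP1, hQ1, liftM_mul, hPQ', liftM_one]
      calc A = (P0 * Q0) * A * (P0 * Q0) := by rw [hPQ0, Matrix.one_mul, Matrix.mul_one]
        _ = P0 * B * Q0 := by rw [hB]; simp only [Matrix.mul_assoc]
        _ = P0 * (P1 * Q1) * B * (P1 * Q1) * Q0 := by
            rw [hQ1P1, Matrix.mul_one, Matrix.mul_one]
        _ = P0 * P1 * T * (Q1 * Q0) := by rw [hT]; simp only [Matrix.mul_assoc]


lemma roots_prod_X_sub_C_univ {α : Type*} [Fintype α] (f : α → ℂ) :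
    (∏ i : α, (X - C (f i))).roots = Multiset.map f Finset.univ.val := by
  have h : ∏ i : α, (X - C (f i)) = ((Finset.univ.val.map f).map fun a => X - C a).prod := by
    rw [Multiset.map_map]
    rfl
  rw [h, Polynomial.roots_multiset_prod_X_sub_C]

lemma map_perm_univ (u : Fin n → ℂ) (τ : Equiv.Perm (Fin n)) :
    Multiset.map (u ∘ τ) Finset.univ.val = Multiset.map u Finset.univ.val := by
  have h1 : Multiset.map (⇑τ) Finset.univ.val = Finset.univ.val := by
    calc Multiset.map (⇑τ) Finset.univ.val = (Finset.univ.map τ.toEmbedding).val := rfl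
      _ = Finset.univ.val := by rw [Finset.map_univ_equiv]
  conv_rhs => rw [← h1, Multiset.map_map]

lemma ofFn_coe (u : Fin n → ℂ) :
    (↑(List.ofFn u) : Multiset ℂ) = Multiset.map u Finset.univ.val := by
  rw [List.ofFn_eq_map]
  rfl

lemma exists_sort_perm {f g : Fin n → ℂ}
    (h : Multiset.map f Finset.univ.val = Multiset.map g Finset.univ.val) :
    ∃ σ : Equiv.Perm (Fin n), f = g ∘ σ := by
  classical
  letI : LinearOrder ℂ := linearOrderOfSTO WellOrderingRel
  have hmono_f : Monotone (f ∘ Tuple.sort f) := Tuple.monotone_sort f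
  have hmono_g : Monotone (g ∘ Tuple.sort g) := Tuple.monotone_sort g
  have hperm : Multiset.map (f ∘ Tuple.sort f) Finset.univ.val
      = Multiset.map (g ∘ Tuple.sort g) Finset.univ.val := by
    rw [map_perm_univ, map_perm_univ, h]
  have hlist : (List.ofFn (f ∘ Tuple.sort f)).Perm (List.ofFn (g ∘ Tuple.sort g)) := by
    rw [← Multiset.coe_eq_coe, ofFn_coe, ofFn_coe]
    exact hperm
  have heq : f ∘ Tuple.sort f = g ∘ Tuple.sort g :=
    List.ofFn_injective
      (List.Perm.eq_of_sortedLE hmono_f.sortedLE_ofFn hmono_g.sortedLE_ofFn hlist)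
  refine ⟨(Tuple.sort f).symm.trans (Tuple.sort g), ?_⟩
  funext x
  have := congrFun heq ((Tuple.sort f).symm x)
  simpa using this

def pairMap (σ : Equiv.Perm (Fin n)) (pq : BialtIndex n) : BialtIndex n :=
  if h : σ pq.1.2 < σ pq.1.1 then ⟨(σ pq.1.1, σ pq.1.2), h⟩
  else ⟨(σ pq.1.2, σ pq.1.1),
    lt_of_le_of_ne (not_lt.mp h) (fun he => absurd (σ.injective he) (ne_of_gt pq.2))⟩

lemma pairMap_pairMap (σ : Equiv.Perm (Fin n)) (pq : BialtIndex n) :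
    pairMap σ.symm (pairMap σ pq) = pq := by
  obtain ⟨⟨p, q⟩, hpq⟩ := pq
  by_cases h : σ q < σ p <;>
    simp [pairMap, h, hpq, not_lt_of_gt hpq, Equiv.symm_apply_apply] <;> rfl

lemma pairMap_add (σ : Equiv.Perm (Fin n)) (μ : Fin n → ℂ) (pq : BialtIndex n) :
    μ (pairMap σ pq).1.1 + μ (pairMap σ pq).1.2 = μ (σ pq.1.1) + μ (σ pq.1.2) := by
  unfold pairMap
  split_ifs with h <;> simp [h, add_comm]

end BialtProof

/-- If the eigenvalues of the `n × n` complex matrix `A`, counted with algebraic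
multiplicity (i.e. the root multiset of its characteristic polynomial), are
`μ₁, …, μₙ`, then the eigenvalues of the bialternate product `2A ⊙ Iₙ`, counted
with algebraic multiplicity, are exactly the sums `μ_p + μ_q` for `p > q`. -/
theorem bialt_charpoly_roots
    {n : ℕ} (A : Matrix (Fin n) (Fin n) ℂ) (μ : Fin n → ℂ)
    (hroots : A.charpoly.roots = Multiset.map μ (Finset.univ.val : Multiset (Fin n))) :
    (bialt A).charpoly.roots
      = Multiset.map (fun pq : BialtIndex n => μ pq.1.1 + μ pq.1.2)
          (Finset.univ.val : Multiset (BialtIndex n)) := by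
  classical
  obtain ⟨P, Q, T, hPQ, hQP, hTtri, hA⟩ := BialtProof.exists_triangularization n A
  have hchar : A.charpoly = T.charpoly := by
    rw [hA]; exact BialtProof.charpoly_similar P Q T hPQ
  have hcharT : T.charpoly = ∏ i, (Polynomial.X - Polynomial.C (T i i)) :=
    Matrix.charpoly_of_upperTriangular T hTtri
  set d : Fin n → ℂ := fun i => T i i with hd
  have hrootsT : A.charpoly.roots = Multiset.map d Finset.univ.val := by
    rw [hchar, hcharT, BialtProof.roots_prod_X_sub_C_univ]
  have hdg : Multiset.map d Finset.univ.val = Multiset.map μ Finset.univ.val := by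
    rw [← hrootsT, hroots]
  obtain ⟨σ, hσ⟩ := BialtProof.exists_sort_perm hdg
  have hbA : (bialt A).charpoly = (bialt T).charpoly := by
    rw [hA, BialtProof.bialt_conj P Q T hPQ hQP]
    exact BialtProof.charpoly_similar _ _ _
      (by rw [← BialtProof.comp2_mul, hPQ, BialtProof.comp2_one])
  have hrootsB : (bialt A).charpoly.roots
      = Multiset.map (fun pq : BialtIndex n => d pq.1.1 + d pq.1.2) Finset.univ.val := by
    rw [hbA, BialtProof.charpoly_bialt_triangular hTtri,
      BialtProof.roots_prod_X_sub_C_univ]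
  rw [hrootsB, hσ]
  refine Multiset.map_eq_map_of_bij_of_nodup _ _ Finset.univ.2 Finset.univ.2
    (fun pq _ => BialtProof.pairMap σ pq) (fun _ _ => Finset.mem_univ _)
    ?_ ?_ ?_
  · intro a ha b hb hab
    have := congrArg (BialtProof.pairMap σ.symm) hab
    rwa [BialtProof.pairMap_pairMap, BialtProof.pairMap_pairMap] at this
  · intro b _
    refine ⟨BialtProof.pairMap σ.symm b, Finset.mem_univ _, ?_⟩
    have := BialtProof.pairMap_pairMap σ.symm b
    rwa [Equiv.symm_symm] at this
  · intro pq _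
    exact (BialtProof.pairMap_add σ μ pq).symm
end

section
/- Let A be an n×n matrix over ℂ with eigenvalues μ₁, …, μₙ counted with algebraic multiplicity. Then det(2A⊙Iₙ) = 0 if and only if there exist indices p > q with μ_p + μ_q = 0. In particular, det(2A⊙Iₙ) = 0 whenever A has a pair of purely imaginary conjugate eigenvalues ±iβ with β ∈ ℝ, and also whenever A has a pair of real eigenvalues of opposite sign and equal modulus; hence the vanishing of the Hopf test function ψ_H(A) = det(2A⊙Iₙ) alone does not certify a pair of purely imaginary complex-conjugate eigenvalues. -/
namespace BialtProof

open Matrix Kronecker Polynomial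

/-! ### Part 1: upper triangularization of a complex matrix -/

/-- embed a matrix as the lower-right block with a 1 in the top-left corner -/
def lift1 {n : ℕ} (T : Matrix (Fin n) (Fin n) ℂ) : Matrix (Fin (n+1)) (Fin (n+1)) ℂ :=
  Matrix.of (Fin.cons (Fin.cons 1 0) (fun i => Fin.cons 0 (T i)))

@[simp] lemma lift1_zero_zero {n : ℕ} (T : Matrix (Fin n) (Fin n) ℂ) : lift1 T 0 0 = 1 := rfl
@[simp] lemma lift1_zero_succ {n : ℕ} (T : Matrix (Fin n) (Fin n) ℂ) (j : Fin n) :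
    lift1 T 0 j.succ = 0 := rfl
@[simp] lemma lift1_succ_zero {n : ℕ} (T : Matrix (Fin n) (Fin n) ℂ) (i : Fin n) :
    lift1 T i.succ 0 = 0 := by simp [lift1]
@[simp] lemma lift1_succ_succ {n : ℕ} (T : Matrix (Fin n) (Fin n) ℂ) (i j : Fin n) :
    lift1 T i.succ j.succ = T i j := by simp [lift1]

lemma lift1_mul_lift1 {n : ℕ} (T S : Matrix (Fin n) (Fin n) ℂ) :
    lift1 T * lift1 S = lift1 (T * S) := by
  ext i j
  rw [Matrix.mul_apply, Fin.sum_univ_succ]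
  refine Fin.cases ?_ (fun i => ?_) i <;> refine Fin.cases ?_ (fun j => ?_) j <;>
    simp [Matrix.mul_apply]

lemma lift1_one {n : ℕ} : lift1 (1 : Matrix (Fin n) (Fin n) ℂ) = 1 := by
  ext i j
  refine Fin.cases ?_ (fun i => ?_) i <;> refine Fin.cases ?_ (fun j => ?_) j <;>
    simp [Matrix.one_apply, Fin.succ_ne_zero, (Fin.succ_ne_zero _).symm, Fin.succ_inj]

lemma exists_triangular : ∀ (n : ℕ) (A : Matrix (Fin n) (Fin n) ℂ),
    ∃ S S' : Matrix (Fin n) (Fin n) ℂ, S * S' = 1 ∧ (S' * A * S).BlockTriangular id := by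
  intro n
  induction n with
  | zero => exact fun A => ⟨1, 1, by simp, fun i j h => absurd h (by omega)⟩
  | succ n ih =>
    intro A
    -- eigenvector
    obtain ⟨μ0, hμ⟩ := Module.End.exists_eigenvalue (Matrix.mulVecLin A)
    obtain ⟨v, hv⟩ := hμ.exists_hasEigenvector
    have hvA : A.mulVec v = μ0 • v := by
      have := hv.apply_eq_smul; simpa using this
    obtain ⟨i, hi⟩ : ∃ i, v i ≠ 0 := Function.ne_iff.mp hv.2
    set σ : Equiv.Perm (Fin (n+1)) := Equiv.swap 0 i with hσ
    set A₁ : Matrix (Fin (n+1)) (Fin (n+1)) ℂ := A.submatrix σ σ with hA₁def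
    set w : Fin (n+1) → ℂ := v ∘ σ with hw
    have hw0 : w 0 ≠ 0 := by simpa [hw, hσ, Equiv.swap_apply_left] using hi
    have hwA : A₁.mulVec w = μ0 • w := by
      ext a
      have : A₁.mulVec w a = A.mulVec v (σ a) := by
        simp only [Matrix.mulVec, dotProduct, hA₁def, Matrix.submatrix_apply, hw,
          Function.comp]
        exact Fintype.sum_equiv σ (fun k => A (σ a) (σ k) * v (σ k))
          (fun k => A (σ a) k * v k) (fun k => rfl)
      rw [this, hvA]; simp [hw]
    -- the basis-change matrix P with first column w
    set P : Matrix (Fin (n+1)) (Fin (n+1)) ℂ := (1 : Matrix _ _ ℂ).updateCol 0 w with hPdef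
    have hPcol : ∀ a, P a 0 = w a := by intro a; simp [hPdef]
    have hPdet : P.det = w 0 := by
      rw [Matrix.det_succ_column_zero, Fin.sum_univ_succ]
      have h0 : (P.submatrix (Fin.succAbove 0) Fin.succ) = 1 := by
        ext a b
        simp [hPdef, Matrix.updateCol_apply, Fin.succ_ne_zero, Matrix.one_apply, Fin.succ_inj]
      have hrest : ∀ i : Fin n, (P.submatrix (Fin.succAbove i.succ) Fin.succ).det = 0 := by
        intro i
        apply Matrix.det_eq_zero_of_row_eq_zero ⟨0, i.pos⟩
        intro j
        have h00 : (Fin.succ i).succAbove ⟨0, i.pos⟩ = 0 := by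
          rw [Fin.succAbove_of_castSucc_lt]
          · rfl
          · simp [Fin.lt_def]
        simp [h00, hPdef, Matrix.updateCol_apply, Fin.succ_ne_zero, Matrix.one_apply,
          (Fin.succ_ne_zero j).symm]
      rw [h0] at *
      simp [hrest, hPcol]
    have hPunit : IsUnit P.det := by rw [hPdet]; exact isUnit_iff_ne_zero.mpr hw0
    set B : Matrix (Fin (n+1)) (Fin (n+1)) ℂ := P⁻¹ * A₁ * P with hBdef
    set e0 : Fin (n+1) → ℂ := Pi.single 0 1 with he0
    have hPw : P.mulVec e0 = w := by
      ext a
      simp [he0, Matrix.mulVec, dotProduct, Pi.single_apply, hPcol]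
    have hBcol : ∀ a : Fin n, B a.succ 0 = 0 := by
      have hB : B.mulVec e0 = μ0 • e0 := by
        have h1 : B.mulVec e0 = P⁻¹.mulVec (A₁.mulVec (P.mulVec e0)) := by
          rw [hBdef, ← Matrix.mulVec_mulVec, ← Matrix.mulVec_mulVec]
        rw [h1, hPw, hwA, Matrix.mulVec_smul, ← hPw, Matrix.mulVec_mulVec,
          Matrix.nonsing_inv_mul _ hPunit, Matrix.one_mulVec]
      intro a
      have := congrFun hB a.succ
      simpa [he0, Matrix.mulVec, dotProduct, Pi.single_apply, Fin.succ_ne_zero] using this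
    -- apply the induction hypothesis to the lower-right block of B
    obtain ⟨T, T', hTT', htri⟩ := ih (B.submatrix Fin.succ Fin.succ)
    set C : Matrix (Fin n) (Fin n) ℂ := B.submatrix Fin.succ Fin.succ with hCdef
    -- permutation matrices
    set Q : Matrix (Fin (n+1)) (Fin (n+1)) ℂ := (1 : Matrix _ _ ℂ).submatrix id σ with hQdef
    set Q' : Matrix (Fin (n+1)) (Fin (n+1)) ℂ := (1 : Matrix _ _ ℂ).submatrix σ id with hQ'def
    have hQQ' : Q * Q' = 1 := by
      ext a b
      rw [Matrix.mul_apply]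
      rw [Fintype.sum_equiv σ.symm (fun k => Q a (σ.symm k) * Q' (σ.symm k) b)
        (fun k => Q a k * Q' k b) (fun k => rfl) |>.symm]
      simp [hQdef, hQ'def, Matrix.one_apply, Finset.sum_ite_eq, eq_comm]
    have hA₁ : A₁ = Q' * A * Q := by
      ext a b
      rw [Matrix.mul_apply]
      have h2 : ∀ k, (Q' * A) a k = A (σ a) k := by
        intro k
        rw [Matrix.mul_apply]
        simp [hQ'def, Matrix.one_apply]
      simp only [h2, hQdef, Matrix.submatrix_apply, Matrix.one_apply, id]
      simp [hA₁def]
    refine ⟨Q * (P * lift1 T), (lift1 T' * P⁻¹) * Q', ?_, ?_⟩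
    · calc Q * (P * lift1 T) * (lift1 T' * P⁻¹ * Q')
          = Q * (P * ((lift1 T * lift1 T') * P⁻¹)) * Q' := by
            simp only [Matrix.mul_assoc]
        _ = 1 := by
          rw [lift1_mul_lift1, hTT', lift1_one, Matrix.one_mul,
            Matrix.mul_nonsing_inv _ hPunit, Matrix.mul_one, hQQ']
    · have hform : lift1 T' * P⁻¹ * Q' * A * (Q * (P * lift1 T)) = lift1 T' * B * lift1 T := by
        have : Q' * A * Q = A₁ := hA₁.symm
        calc lift1 T' * P⁻¹ * Q' * A * (Q * (P * lift1 T))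
            = lift1 T' * (P⁻¹ * ((Q' * A * Q) * P)) * lift1 T := by
              simp only [Matrix.mul_assoc]
          _ = lift1 T' * B * lift1 T := by
              rw [this, hBdef]; simp only [Matrix.mul_assoc]
      rw [hform]
      intro a b hab
      rcases Fin.eq_zero_or_eq_succ a with rfl | ⟨a', rfl⟩
      · exact absurd hab (by simp)
      rcases Fin.eq_zero_or_eq_succ b with rfl | ⟨b', rfl⟩
      · -- column zero
        rw [Matrix.mul_apply, Fin.sum_univ_succ]
        have h4 : (lift1 T' * B) a'.succ 0 = 0 := by
          rw [Matrix.mul_apply, Fin.sum_univ_succ]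
          simp [hBcol]
        simp [h4]
      · -- interior block
        have hb'a' : (b' : Fin n) < a' := by
          simpa [Fin.succ_lt_succ_iff] using hab
        have h3 : ∀ k : Fin n, (lift1 T' * B) a'.succ k.succ = (T' * C) a' k := by
          intro k
          rw [Matrix.mul_apply, Fin.sum_univ_succ, Matrix.mul_apply]
          simp [hCdef]
        have hentry : (lift1 T' * B * lift1 T) a'.succ b'.succ = (T' * C * T) a' b' := by
          calc (lift1 T' * B * lift1 T) a'.succ b'.succ
              = ∑ k : Fin n, (T' * C) a' k * T k b' := by
                rw [Matrix.mul_apply, Fin.sum_univ_succ]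
                simp only [h3, lift1_zero_succ, lift1_succ_succ, mul_zero, zero_add]
            _ = (T' * C * T) a' b' := (Matrix.mul_apply).symm
        rw [hentry]
        exact htri hb'a'

/-! ### Part 2: the second additive compound and similarity invariance -/

lemma filter_sum {n : ℕ} (g : Fin n × Fin n → ℂ) :
    ∑ z ∈ Finset.univ.filter (fun z : Fin n × Fin n => z.2 < z.1), g z
      = ∑ z : BialtIndex n, g z.1 := by
  rw [Finset.sum_subtype (p := fun z : Fin n × Fin n => z.2 < z.1)
    (Finset.univ.filter (fun z : Fin n × Fin n => z.2 < z.1)) (by simp) g]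
  rfl

lemma sum_pairs {n : ℕ} (f : Fin n × Fin n → ℂ) :
    ∑ z : Fin n × Fin n, f z
      = (∑ z : BialtIndex n, (f z.1 + f (z.1.2, z.1.1))) + ∑ i : Fin n, f (i, i) := by
  classical
  rw [← Finset.sum_filter_add_sum_filter_not Finset.univ (fun z : Fin n × Fin n => z.2 < z.1) f,
    ← Finset.sum_filter_add_sum_filter_not
      (Finset.univ.filter (fun z : Fin n × Fin n => ¬ z.2 < z.1))
      (fun z : Fin n × Fin n => z.1 < z.2) f]
  rw [Finset.filter_filter, Finset.filter_filter]
  have h2 : ∑ z ∈ Finset.univ.filter (fun z : Fin n × Fin n => ¬ z.2 < z.1 ∧ z.1 < z.2), f z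
      = ∑ z : BialtIndex n, f (z.1.2, z.1.1) := by
    rw [← filter_sum (fun z => f (z.2, z.1))]
    refine Finset.sum_nbij' (fun z => (z.2, z.1)) (fun z => (z.2, z.1)) ?_ ?_ ?_ ?_ ?_ <;>
      simp +contextual [and_comm]
    omega
  have h3 : ∑ z ∈ Finset.univ.filter (fun z : Fin n × Fin n => ¬ z.2 < z.1 ∧ ¬ z.1 < z.2), f z
      = ∑ i : Fin n, f (i, i) := by
    refine Finset.sum_nbij' (fun z => z.1) (fun i => (i, i)) ?_ ?_ ?_ ?_ ?_ <;>
      simp +contextual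
    · intro a b h1 h2; omega
    · intro a b h1 h2
      have : a = b := by omega
      simp [this]
  rw [filter_sum, h2, h3, Finset.sum_add_distrib, add_assoc]

/-- the derivation `A ⊗ 1 + 1 ⊗ A` on pairs -/
def derv {n : ℕ} (A : Matrix (Fin n) (Fin n) ℂ) :
    Matrix (Fin n × Fin n) (Fin n × Fin n) ℂ :=
  A ⊗ₖ 1 + 1 ⊗ₖ A

/-- antisymmetrized compression of a matrix on pairs to the strict-pairs index -/
def altOf {n : ℕ} (X : Matrix (Fin n × Fin n) (Fin n × Fin n) ℂ) :
    Matrix (BialtIndex n) (BialtIndex n) ℂ :=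
  fun pq rs => X pq.1 rs.1 - X pq.1 (rs.1.2, rs.1.1)

lemma tens_swap {n : ℕ} (S : Matrix (Fin n) (Fin n) ℂ) (p q r s : Fin n) :
    (S ⊗ₖ S) (q, p) (s, r) = (S ⊗ₖ S) (p, q) (r, s) := by
  simp [Matrix.kroneckerMap_apply, mul_comm]

lemma derv_swap {n : ℕ} (A : Matrix (Fin n) (Fin n) ℂ) (p q r s : Fin n) :
    derv A (q, p) (s, r) = derv A (p, q) (r, s) := by
  simp only [derv, Matrix.add_apply, Matrix.kroneckerMap_apply, Matrix.one_apply]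
  rw [add_comm]
  congr 1 <;> simp [eq_comm, mul_comm]

lemma altOf_mul {n : ℕ} (X Y : Matrix (Fin n × Fin n) (Fin n × Fin n) ℂ)
    (hY : ∀ p q r s, Y (q, p) (s, r) = Y (p, q) (r, s)) :
    altOf (X * Y) = altOf X * altOf Y := by
  ext pq kl
  show (X * Y) pq.1 kl.1 - (X * Y) pq.1 (kl.1.2, kl.1.1) = _
  rw [Matrix.mul_apply, Matrix.mul_apply, ← Finset.sum_sub_distrib,
    sum_pairs (fun z => X pq.1 z * Y z kl.1 - X pq.1 z * Y z (kl.1.2, kl.1.1))]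
  have hdiag : ∀ i ∈ Finset.univ,
      X pq.1 (i, i) * Y (i, i) kl.1 - X pq.1 (i, i) * Y (i, i) (kl.1.2, kl.1.1) = 0 := by
    intro i _
    have : Y (i, i) (kl.1.2, kl.1.1) = Y (i, i) kl.1 := hY i i kl.1.1 kl.1.2
    rw [this]; ring
  rw [Finset.sum_eq_zero hdiag, add_zero]
  refine Finset.sum_congr rfl (fun z _ => ?_)
  have h1 : Y (z.1.2, z.1.1) (kl.1.1, kl.1.2) = Y (z.1.1, z.1.2) (kl.1.2, kl.1.1) :=
    hY z.1.1 z.1.2 kl.1.2 kl.1.1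
  have h2 : Y (z.1.2, z.1.1) (kl.1.2, kl.1.1) = Y (z.1.1, z.1.2) (kl.1.1, kl.1.2) :=
    hY z.1.1 z.1.2 kl.1.1 kl.1.2
  show _ = (X pq.1 z.1 - X pq.1 (z.1.2, z.1.1)) * (Y z.1 kl.1 - Y z.1 (kl.1.2, kl.1.1))
  have hz : z.1 = (z.1.1, z.1.2) := rfl
  have hkl : kl.1 = (kl.1.1, kl.1.2) := rfl
  rw [hz, hkl] at *
  rw [h1, h2]
  ring

lemma altOf_one {n : ℕ} : altOf (1 : Matrix (Fin n × Fin n) (Fin n × Fin n) ℂ) = 1 := by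
  ext pq rs
  obtain ⟨⟨p, q⟩, hpq⟩ := pq
  obtain ⟨⟨r, s⟩, hrs⟩ := rs
  show (1 : Matrix (Fin n × Fin n) _ ℂ) (p, q) (r, s)
      - (1 : Matrix (Fin n × Fin n) _ ℂ) (p, q) (s, r) = _
  simp only [Fin.lt_def] at hpq hrs
  rw [Matrix.one_apply, Matrix.one_apply]
  erw [Matrix.one_apply]
  simp only [Subtype.mk.injEq, Prod.mk.injEq]
  split_ifs with h1 h2 h2
  · exfalso
    simp only [Fin.ext_iff] at h1 h2
    omega
  · ring
  · exfalso
    simp only [Fin.ext_iff] at h2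
    omega
  · ring

set_option maxHeartbeats 2000000 in
lemma altOf_derv {n : ℕ} (A : Matrix (Fin n) (Fin n) ℂ) : altOf (derv A) = bialt A := by
  ext pq rs
  obtain ⟨⟨p, q⟩, hpq⟩ := pq
  obtain ⟨⟨r, s⟩, hrs⟩ := rs
  simp only [Fin.lt_def] at hpq hrs
  show (A p r * (if q = s then 1 else 0) + (if p = r then 1 else 0) * A q s)
      - (A p s * (if q = r then 1 else 0) + (if p = s then 1 else 0) * A q r)
      = (if r = q then -A p s
          else if r ≠ p ∧ s = q then A p r
          else if r = p ∧ s = q then A p p + A q q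
          else if r = p ∧ s ≠ q then A q s
          else if s = p then -A q r
          else 0)
  split_ifs <;>
    first
      | ring1
      | (exfalso; simp only [ne_eq, not_and, not_not, Fin.ext_iff] at *; omega)
      | (subst_vars; ring1)
      | (subst_vars; exfalso; simp only [ne_eq, not_and, not_not, Fin.ext_iff] at *; omega)

lemma bialt_similar {n : ℕ} {A S S' U : Matrix (Fin n) (Fin n) ℂ}
    (hSS' : S * S' = 1) (hU : A * S = S * U) :
    (bialt A).det = (bialt U).det := by
  have htens : (S ⊗ₖ S) * (S' ⊗ₖ S') = (1 : Matrix (Fin n × Fin n) (Fin n × Fin n) ℂ) := by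
    rw [← Matrix.mul_kronecker_mul, hSS', Matrix.one_kronecker_one]
  have hZZ' : altOf (S ⊗ₖ S) * altOf (S' ⊗ₖ S') = 1 := by
    rw [← altOf_mul _ _ (tens_swap S'), htens, altOf_one]
  have hcomm : bialt A * altOf (S ⊗ₖ S) = altOf (S ⊗ₖ S) * bialt U := by
    rw [← altOf_derv A, ← altOf_derv U, ← altOf_mul _ _ (tens_swap S),
      ← altOf_mul _ _ (derv_swap U)]
    congr 1
    simp only [derv, Matrix.add_mul, Matrix.mul_add, ← Matrix.mul_kronecker_mul,
      Matrix.mul_one, Matrix.one_mul, hU]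
  have hrep : bialt A = altOf (S ⊗ₖ S) * bialt U * altOf (S' ⊗ₖ S') := by
    calc bialt A = bialt A * (altOf (S ⊗ₖ S) * altOf (S' ⊗ₖ S')) := by
          rw [hZZ', Matrix.mul_one]
      _ = bialt A * altOf (S ⊗ₖ S) * altOf (S' ⊗ₖ S') := by rw [Matrix.mul_assoc]
      _ = altOf (S ⊗ₖ S) * bialt U * altOf (S' ⊗ₖ S') := by rw [hcomm]
  rw [hrep, Matrix.det_mul, Matrix.det_mul]
  have hdet : (altOf (S ⊗ₖ S)).det * (altOf (S' ⊗ₖ S')).det = 1 := by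
    rw [← Matrix.det_mul, hZZ', Matrix.det_one]
  calc (altOf (S ⊗ₖ S)).det * (bialt U).det * (altOf (S' ⊗ₖ S')).det
      = (bialt U).det * ((altOf (S ⊗ₖ S)).det * (altOf (S' ⊗ₖ S')).det) := by ring
    _ = (bialt U).det := by rw [hdet, mul_one]

/-! ### Part 3: determinant of the bialternate product of a triangular matrix -/

instance (n : ℕ) : LinearOrder (BialtIndex n) :=
  LinearOrder.lift' (fun pq => toLex pq.1) (fun a b h => Subtype.ext (toLex.injective h))

lemma bialt_blockTriangular_s7 {n : ℕ} {U : Matrix (Fin n) (Fin n) ℂ}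
    (h : U.BlockTriangular id) : (bialt U).BlockTriangular id := by
  intro pq rs hlt
  have hz : ∀ a b : Fin n, (b : ℕ) < (a : ℕ) → U a b = 0 := fun a b hab => h hab
  rw [← altOf_derv U]
  obtain ⟨⟨p, q⟩, hpq⟩ := pq
  obtain ⟨⟨r, s⟩, hrs⟩ := rs
  have hlex : toLex ((r, s)) < toLex ((p, q)) := hlt
  rw [Prod.Lex.lt_iff] at hlex
  simp only [Fin.lt_def, Fin.ext_iff, ofLex_toLex] at hpq hrs hlex
  show (U p r * (if q = s then 1 else 0) + (if p = r then 1 else 0) * U q s)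
      - (U p s * (if q = r then 1 else 0) + (if p = s then 1 else 0) * U q r) = 0
  have t1 : U p r * (if q = s then (1:ℂ) else 0) = 0 := by
    by_cases e : q = s
    · have e' : (q : ℕ) = (s : ℕ) := congrArg Fin.val e
      rw [hz p r (by omega), zero_mul]
    · rw [if_neg e, mul_zero]
  have t2 : (if p = r then (1:ℂ) else 0) * U q s = 0 := by
    by_cases e : p = r
    · have e' : (p : ℕ) = (r : ℕ) := congrArg Fin.val e
      rw [hz q s (by omega), mul_zero]
    · rw [if_neg e, zero_mul]
  have t3 : U p s * (if q = r then (1:ℂ) else 0) = 0 := by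
    by_cases e : q = r
    · have e' : (q : ℕ) = (r : ℕ) := congrArg Fin.val e
      rw [hz p s (by omega), zero_mul]
    · rw [if_neg e, mul_zero]
  have t4 : (if p = s then (1:ℂ) else 0) * U q r = 0 := by
    by_cases e : p = s
    · have e' : (p : ℕ) = (s : ℕ) := congrArg Fin.val e
      exfalso; omega
    · rw [if_neg e, zero_mul]
  rw [t1, t2, t3, t4]
  ring

lemma bialt_diag {n : ℕ} (U : Matrix (Fin n) (Fin n) ℂ) (z : BialtIndex n) :
    bialt U z z = U z.1.1 z.1.1 + U z.1.2 z.1.2 := by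
  obtain ⟨⟨p, q⟩, hpq⟩ := z
  have hne : ¬ p = q := by
    intro h
    simp only [Fin.lt_def, Fin.ext_iff] at hpq h
    omega
  show (if p = q then -U p q
      else if p ≠ p ∧ q = q then U p p
      else if p = p ∧ q = q then U p p + U q q
      else if p = p ∧ q ≠ q then U q q
      else if q = p then -U q p
      else 0) = U p p + U q q
  rw [if_neg hne, if_neg (fun h => h.1 rfl), if_pos ⟨rfl, rfl⟩]

lemma det_bialt_of_triangular {n : ℕ} (U : Matrix (Fin n) (Fin n) ℂ)
    (h : U.BlockTriangular id) :
    (bialt U).det = ∏ z : BialtIndex n, (U z.1.1 z.1.1 + U z.1.2 z.1.2) := by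
  rw [Matrix.det_of_upperTriangular (bialt_blockTriangular_s7 h)]
  exact Finset.prod_congr rfl (fun z _ => bialt_diag U z)

/-! ### Part 4: characteristic polynomial under conjugation, and the root pairing -/

lemma charpoly_conj {n : ℕ} {A S S' : Matrix (Fin n) (Fin n) ℂ} (hSS' : S * S' = 1) :
    (S' * A * S).charpoly = A.charpoly := by
  have hS'S : S' * S = 1 := mul_eq_one_comm.mp hSS'
  set f : Matrix (Fin n) (Fin n) ℂ →+* Matrix (Fin n) (Fin n) ℂ[X] :=
    (Polynomial.C : ℂ →+* ℂ[X]).mapMatrix with hf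
  have hfone : f S' * f S = 1 := by rw [← _root_.map_mul, hS'S, _root_.map_one]
  have hcomm : ∀ M : Matrix (Fin n) (Fin n) ℂ[X],
      M * Matrix.scalar (Fin n) (X : ℂ[X]) = Matrix.scalar (Fin n) (X : ℂ[X]) * M :=
    fun M => (Matrix.scalar_commute (X : ℂ[X]) (fun r => Commute.all _ _) M).symm
  have key : Matrix.charmatrix (S' * A * S) = f S' * Matrix.charmatrix A * f S := by
    show Matrix.scalar (Fin n) (X : ℂ[X]) - f (S' * A * S)
        = f S' * (Matrix.scalar (Fin n) (X : ℂ[X]) - f A) * f S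
    rw [Matrix.mul_sub, Matrix.sub_mul, hcomm (f S'), _root_.map_mul, _root_.map_mul]
    congr 1
    rw [Matrix.mul_assoc, hfone, Matrix.mul_one]
  rw [Matrix.charpoly, key, Matrix.det_mul, Matrix.det_mul, ← Matrix.charpoly]
  have : (f S').det * (f S).det = 1 := by rw [← Matrix.det_mul, hfone, Matrix.det_one]
  calc (f S').det * A.charpoly * (f S).det
      = A.charpoly * ((f S').det * (f S).det) := by ring
    _ = A.charpoly := by rw [this, mul_one]

lemma exists_pair_iff {n : ℕ} (f : Fin n → ℂ) (s : Multiset ℂ)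
    (hs : Multiset.map f Finset.univ.val = s) :
    (∃ p q : Fin n, q < p ∧ f p + f q = 0) ↔ ∃ a ∈ s, ∃ b ∈ s.erase a, a + b = 0 := by
  subst hs
  constructor
  · rintro ⟨p, q, hlt, h0⟩
    refine ⟨f p, Multiset.mem_map_of_mem f (by simp), f q, ?_, h0⟩
    have hcons : Finset.univ.val = p ::ₘ Finset.univ.val.erase p :=
      (Multiset.cons_erase (by simp)).symm
    rw [hcons, Multiset.map_cons, Multiset.erase_cons_head]
    exact Multiset.mem_map_of_mem f ((Multiset.mem_erase_of_ne (ne_of_lt hlt)).mpr (by simp))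
  · rintro ⟨a, ha, b, hb, hab⟩
    obtain ⟨p, -, rfl⟩ := Multiset.mem_map.mp ha
    have hcons : Finset.univ.val = p ::ₘ Finset.univ.val.erase p :=
      (Multiset.cons_erase (by simp)).symm
    rw [hcons, Multiset.map_cons, Multiset.erase_cons_head] at hb
    obtain ⟨q, hq, rfl⟩ := Multiset.mem_map.mp hb
    have hqp : q ≠ p := by
      intro h; subst h
      exact (Finset.univ.nodup).notMem_erase hq
    rcases lt_or_gt_of_ne hqp with h | h
    · exact ⟨p, q, h, hab⟩
    · exact ⟨q, p, h, by rw [add_comm]; exact hab⟩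

end BialtProof

/-- Let `A` be an `n × n` complex matrix with eigenvalues `μ₁, …, μₙ` counted
with algebraic multiplicity.  The Hopf test function `ψ_H(A) = det (2A ⊙ Iₙ)`
vanishes if and only if `μ_p + μ_q = 0` for some pair of indices `p > q`.
In particular it vanishes whenever `A` has a pair of purely imaginary conjugate
eigenvalues `± i β` (`β` real), and also whenever `A` has a pair of real
eigenvalues of opposite sign and equal modulus, so its vanishing alone does not
certify a pair of purely imaginary complex-conjugate eigenvalues. -/
theorem bialt_det_eq_zero_iff
    {n : ℕ} (A : Matrix (Fin n) (Fin n) ℂ) (μ : Fin n → ℂ)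
    (hroots : A.charpoly.roots = Multiset.map μ (Finset.univ.val : Multiset (Fin n))) :
    ((bialt A).det = 0 ↔ ∃ p q : Fin n, q < p ∧ μ p + μ q = 0) ∧
    (∀ β : ℝ, (∃ p q : Fin n, q < p ∧ μ p = (β : ℂ) * Complex.I ∧
        μ q = -((β : ℂ) * Complex.I)) → (bialt A).det = 0) ∧
    (∀ a : ℝ, (∃ p q : Fin n, q < p ∧ μ p = (a : ℂ) ∧ μ q = -(a : ℂ)) →
        (bialt A).det = 0) := by
  classical
  open BialtProof Polynomial in
  obtain ⟨S, S', hSS', htri⟩ := BialtProof.exists_triangular n A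
  set U := S' * A * S with hU
  have hAS : A * S = S * U := by
    calc A * S = (S * S') * (A * S) := by rw [hSS', Matrix.one_mul]
      _ = S * U := by rw [hU]; simp only [Matrix.mul_assoc]
  have hdet : (bialt A).det = ∏ z : BialtIndex n, (U z.1.1 z.1.1 + U z.1.2 z.1.2) := by
    rw [BialtProof.bialt_similar hSS' hAS, BialtProof.det_bialt_of_triangular U htri]
  have hrootsU : Multiset.map (fun i => U i i) Finset.univ.val = A.charpoly.roots := by
    have h1 : A.charpoly = U.charpoly := (BialtProof.charpoly_conj hSS').symm
    rw [h1, Matrix.charpoly_of_upperTriangular U htri, Finset.prod_eq_multiset_prod,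
      show (fun i => (X : ℂ[X]) - C (U i i)) = ((fun a : ℂ => X - C a) ∘ (fun i => U i i))
        from rfl,
      ← Multiset.map_map, Polynomial.roots_multiset_prod_X_sub_C]
  have key : (bialt A).det = 0 ↔ ∃ p q : Fin n, q < p ∧ μ p + μ q = 0 := by
    rw [hdet, Finset.prod_eq_zero_iff]
    rw [BialtProof.exists_pair_iff μ A.charpoly.roots (by rw [hroots]),
      ← BialtProof.exists_pair_iff (fun i => U i i) A.charpoly.roots hrootsU]
    constructor
    · rintro ⟨z, -, hz⟩; exact ⟨z.1.1, z.1.2, z.2, hz⟩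
    · rintro ⟨p, q, hlt, h0⟩; exact ⟨⟨(p, q), hlt⟩, Finset.mem_univ _, h0⟩
  refine ⟨key, ?_, ?_⟩
  · rintro β ⟨p, q, hlt, hp, hq⟩
    exact key.mpr ⟨p, q, hlt, by rw [hp, hq]; ring⟩
  · rintro a ⟨p, q, hlt, hp, hq⟩
    exact key.mpr ⟨p, q, hlt, by rw [hp, hq]; ring⟩
end
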